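/- Let 0 < β ≤ 1 and A_β = β^{-1}·16·log₂(e). Define f(t) = t^{1/β} · 2^{-t/(16 (log₂ t)^2)} for t ≥ 32. Then f is non-decreasing on [32, A_β(log₂ A_β)^2] and non-increasing on [22·A_β(log₂ A_β)^2, ∞); consequently f(t) ≤ (22 A_β (log₂ A_β)^2)^{1/β} · 2^{-A_β(log₂ A_β)^2 / (16 (log₂(A_β (log₂ A_β)^2))^2)} for all t ≥ 32. -/

import Mathlib

open Real Set

lemma phi_hasDeriv {u : ℝ} (hu : 1 < u) :
    HasDerivAt (fun v : ℝ => v / Real.log v ^ 2)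
      ((Real.log u - 2) / Real.log u ^ 3) u := by
  have hu0 : u ≠ 0 := by positivity
  have hlu : 0 < Real.log u := Real.log_pos hu
  have hne : Real.log u ^ 2 ≠ 0 := by positivity
  have h := (hasDerivAt_id' u).fun_div ((Real.hasDerivAt_log hu0).fun_pow 2) hne
  refine h.congr_deriv ?_
  field_simp
  ring

lemma g_hasDeriv (p c : ℝ) {u : ℝ} (hu : 1 < u) :
    HasDerivAt (fun v : ℝ => p * Real.log v - c * (v / Real.log v ^ 2))
      (p * u⁻¹ - c * ((Real.log u - 2) / Real.log u ^ 3)) u := by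
  have hu0 : u ≠ 0 := by positivity
  exact ((Real.hasDerivAt_log hu0).const_mul p).sub ((phi_hasDeriv hu).const_mul c)

lemma phi_mono : MonotoneOn (fun u : ℝ => u / Real.log u ^ 2) (Set.Ici 8) := by
  have h8 : (2:ℝ) ≤ Real.log 8 := by
    have : (8:ℝ) = 2 ^ (3:ℕ) := by norm_num
    rw [this, Real.log_pow]
    have := Real.log_two_gt_d9
    push_cast
    nlinarith
  apply monotoneOn_of_deriv_nonneg (convex_Ici 8)
  · intro u hu
    have hu1 : (1:ℝ) < u := lt_of_lt_of_le (by norm_num) hu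
    exact ((phi_hasDeriv hu1).continuousAt).continuousWithinAt
  · intro u hu
    rw [interior_Ici] at hu
    have hu1 : (1:ℝ) < u := lt_trans (by norm_num) hu
    exact (phi_hasDeriv hu1).differentiableAt.differentiableWithinAt
  · intro u hu
    rw [interior_Ici] at hu
    have hu1 : (1:ℝ) < u := lt_trans (by norm_num) hu
    rw [(phi_hasDeriv hu1).deriv]
    have hlu : (2:ℝ) ≤ Real.log u := le_trans h8 (Real.log_le_log (by norm_num) hu.le)
    apply div_nonneg (by linarith) (by positivity)

lemma key_mono1 (A L u x : ℝ) (hApos : 0 < A) (hup : 0 < u) (hxlb : 3.46 ≤ x)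
    (hL0 : 0 < L) (hL2 : L ≤ 0.7) (h : u ≤ A) : L^2 * u * (x - 2) ≤ A * x^3 := by
  have h1 : (0:ℝ) ≤ 1 - L^2 := by nlinarith
  have h2 : (0:ℝ) ≤ u * (x - 2) := mul_nonneg hup.le (by linarith)
  have e1 : L^2 * u * (x-2) ≤ u * (x-2) := by nlinarith [mul_nonneg h1 h2]
  have e2 : u * (x-2) ≤ A * (x-2) := by nlinarith
  have e3 : A * (x-2) ≤ A * x^3 := by
    have hc : (0:ℝ) ≤ x^3 - (x-2) := by
      nlinarith [mul_nonneg (show (0:ℝ) ≤ x by linarith) (show (0:ℝ) ≤ x^2 - 1 by nlinarith)]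
    nlinarith [mul_nonneg hApos.le hc]
  linarith

lemma key_mono2 (A L a u x : ℝ) (hApos : 0 < A) (hup : 0 < u) (hxlb : 3.46 ≤ x)
    (ha3 : 3 ≤ a) (hax : a ≤ x) (hL2u : L^2 * u ≤ A * a^2) :
    L^2 * u * (x - 2) ≤ A * x^3 := by
  have e1 : L^2 * u * (x-2) ≤ A * a^2 * (x-2) := by nlinarith
  have e2 : A * a^2 * (x-2) ≤ A * x^2 * (x-2) := by
    nlinarith [mul_nonneg (mul_nonneg hApos.le (show (0:ℝ) ≤ x^2 - a^2 by nlinarith)) (show (0:ℝ) ≤ x - 2 by linarith)]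
  have e3 : A * x^2 * (x-2) ≤ A * x^3 := by nlinarith
  linarith

lemma key_poly (X s : ℝ) (hX : 8.5 ≤ X) (hs : 0 ≤ s) :
    (X + s)^3 ≤ 1.9 * X^2 * ((1 + s + s^2/4) * (X + s - 2)) := by
  nlinarith [sq_nonneg s, mul_nonneg hs (sq_nonneg s), sq_nonneg X,
    mul_nonneg (mul_nonneg hs hs) (show (0:ℝ) ≤ X - 8.5 by linarith),
    mul_nonneg hs (show (0:ℝ) ≤ X - 8.5 by linarith),
    mul_nonneg (mul_nonneg hs (show (0:ℝ) ≤ X - 8.5 by linarith)) (show (0:ℝ) ≤ X by linarith),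
    mul_nonneg (mul_nonneg (mul_nonneg hs hs) hs) (show (0:ℝ) ≤ X by linarith),
    mul_nonneg (mul_nonneg hs hs) (mul_nonneg (show (0:ℝ) ≤ X by linarith) (show (0:ℝ) ≤ X by linarith))]

lemma exp_quad (s : ℝ) (hs : 0 ≤ s) : 1 + s + s^2/4 ≤ Real.exp s := by
  have h := Real.add_one_le_exp (s/2)
  have h2 : Real.exp s = Real.exp (s/2) ^ 2 := by
    rw [sq, ← Real.exp_add]; norm_num
  nlinarith [Real.exp_pos (s/2)]

lemma key_anti (a X s : ℝ) (hX : 8.5 ≤ X) (hs : 0 ≤ s) (h19 : 1.9 * X^2 ≤ 22 * a^2) :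
    (X + s)^3 ≤ 22 * a^2 * (Real.exp s * (X + s - 2)) := by
  have h1 := key_poly X s hX hs
  have h2 := exp_quad s hs
  have hq : (0:ℝ) ≤ (1 + s + s^2/4) * (X + s - 2) := by
    apply mul_nonneg (by nlinarith) (by linarith)
  have h3 : 1.9 * X^2 * ((1 + s + s^2/4) * (X + s - 2)) ≤ 22 * a^2 * ((1 + s + s^2/4) * (X + s - 2)) :=
    mul_le_mul_of_nonneg_right h19 hq
  have h4 : 22 * a^2 * ((1 + s + s^2/4) * (X + s - 2)) ≤ 22 * a^2 * (Real.exp s * (X + s - 2)) := by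
    have : (1 + s + s^2/4) * (X + s - 2) ≤ Real.exp s * (X + s - 2) :=
      mul_le_mul_of_nonneg_right h2 (by linarith)
    have ha2 : (0:ℝ) ≤ 22 * a^2 := by positivity
    exact mul_le_mul_of_nonneg_left this ha2
  linarith

set_option maxHeartbeats 1000000 in
theorem stmt_7 (β : ℝ) (hβ0 : 0 < β) (hβ1 : β ≤ 1)
    (A : ℝ) (hA : A = β⁻¹ * 16 * Real.logb 2 (Real.exp 1))
    (f : ℝ → ℝ)
    (hf : ∀ t ≥ (32:ℝ), f t = t ^ (1 / β) * (2 : ℝ) ^ (-(t / (16 * (Real.logb 2 t) ^ 2)))) :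
    MonotoneOn f (Set.Icc 32 (A * (Real.logb 2 A) ^ 2)) ∧
    AntitoneOn f (Set.Ici (22 * A * (Real.logb 2 A) ^ 2)) ∧
    ∀ t ≥ (32:ℝ), f t ≤ (22 * A * (Real.logb 2 A) ^ 2) ^ (1 / β) *
      (2 : ℝ) ^ (-(A * (Real.logb 2 A) ^ 2 / (16 * (Real.logb 2 (A * (Real.logb 2 A) ^ 2)) ^ 2))) := by
  have h22eq : 22 * A * (Real.logb 2 A) ^ 2 = 22 * (A * (Real.logb 2 A) ^ 2) := by ring
  rw [h22eq]
  have hL1 : (0.6931471803:ℝ) < Real.log 2 := Real.log_two_gt_d9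
  have hL2 : Real.log 2 < 0.6931471808 := Real.log_two_lt_d9
  obtain ⟨L, hLdef⟩ : ∃ L : ℝ, L = Real.log 2 := ⟨_, rfl⟩
  rw [← hLdef] at hL1 hL2
  have hL0 : 0 < L := by linarith
  have hAval : A * (β * L) = 16 := by
    rw [hA, hLdef]
    simp only [Real.logb, Real.log_exp]
    field_simp
  have hApos : 0 < A := by nlinarith [mul_pos hβ0 hL0]
  have hA23 : 23 ≤ A := by nlinarith [mul_pos hβ0 hL0]
  obtain ⟨a, hadef⟩ : ∃ a : ℝ, a = Real.log A := ⟨_, rfl⟩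
  have ha3 : 3 ≤ a := by
    rw [hadef, ← Real.log_exp 3]
    apply Real.log_le_log (Real.exp_pos 3)
    have h3 : Real.exp 3 = Real.exp 1 ^ (3:ℕ) := by
      rw [← Real.exp_nat_mul]; norm_num
    have h1 := Real.exp_one_lt_d9
    have h0 := Real.exp_pos 1
    have h2 : Real.exp 1 ^ (3:ℕ) < 2.7182818286 ^ (3:ℕ) :=
      pow_lt_pow_left₀ h1 h0.le (by norm_num)
    rw [h3]
    nlinarith [h2]
  have hlogbA : Real.logb 2 A = a / L := by rw [Real.logb, ← hLdef, ← hadef]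
  set T : ℝ := A * (Real.logb 2 A) ^ 2 with hTdef
  have hTval : T = A * a ^ 2 / L ^ 2 := by
    rw [hTdef, hlogbA]; field_simp
  have hT414 : 414 ≤ T := by
    rw [hTval, le_div_iff₀ (by positivity : (0:ℝ) < L^2)]
    have haa : (9:ℝ) ≤ a ^ 2 := by nlinarith
    have h1 : (207:ℝ) ≤ A * a ^ 2 := by nlinarith [mul_le_mul hA23 haa (by norm_num) hApos.le]
    nlinarith [sq_nonneg L]
  have hβeq : 1 / β = A * L / 16 := by
    have hb : β ≠ 0 := ne_of_gt hβ0
    field_simp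
    linarith [hAval]
  -- the log-scale auxiliary function
  set g : ℝ → ℝ := fun t => (1/β) * Real.log t - (L^3/16) * (t / Real.log t ^ 2) with hgdef
  have hfexp : ∀ t, 32 ≤ t → f t = Real.exp (g t) := by
    intro t ht
    have ht0 : (0:ℝ) < t := by linarith
    have hx : 0 < Real.log t := Real.log_pos (by linarith)
    rw [hf t ht, Real.rpow_def_of_pos ht0, Real.rpow_def_of_pos (by norm_num : (0:ℝ) < 2),
      ← Real.exp_add]
    congr 1
    have hlb : Real.logb 2 t = Real.log t / L := by rw [Real.logb, ← hLdef]
    rw [hlb, hgdef, ← hLdef]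
    field_simp
    ring
  have hlog32 : (3.46:ℝ) ≤ Real.log 32 := by
    have h5 : (32:ℝ) = 2 ^ (5:ℕ) := by norm_num
    rw [h5, Real.log_pow, ← hLdef]
    push_cast
    nlinarith
  -- derivative rewriting
  have hderiv_eq : ∀ u : ℝ, 0 < u → 0 < Real.log u →
      (1/β) * u⁻¹ - (L^3/16) * ((Real.log u - 2) / Real.log u ^ 3)
        = (A * Real.log u ^ 3 - L^2 * u * (Real.log u - 2)) * (L / (16 * u * Real.log u ^ 3)) := by
    intro u hu hlu
    rw [hβeq]
    field_simp
  have hgd : ∀ u : ℝ, 1 < u → HasDerivAt g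
      ((1/β) * u⁻¹ - (L^3/16) * ((Real.log u - 2) / Real.log u ^ 3)) u :=
    fun u hu => g_hasDeriv (1/β) (L^3/16) hu
  -- monotone part for g
  have hgmono : MonotoneOn g (Set.Icc 32 T) := by
    apply monotoneOn_of_deriv_nonneg (convex_Icc _ _)
    · intro u hu
      have hu1 : (1:ℝ) < u := by have := hu.1; linarith
      exact (hgd u hu1).continuousAt.continuousWithinAt
    · rw [interior_Icc]
      intro u hu
      have hu1 : (1:ℝ) < u := by have := hu.1; linarith
      exact (hgd u hu1).differentiableAt.differentiableWithinAt
    · rw [interior_Icc]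
      intro u hu
      obtain ⟨hu32, huT⟩ := hu
      have hu1 : (1:ℝ) < u := by linarith
      have hup : (0:ℝ) < u := by linarith
      have hxlb : (3.46:ℝ) ≤ Real.log u :=
        le_trans hlog32 (Real.log_le_log (by norm_num) hu32.le)
      have hx0 : 0 < Real.log u := by linarith
      rw [(hgd u hu1).deriv, hderiv_eq u hup hx0]
      have key : L^2 * u * (Real.log u - 2) ≤ A * Real.log u ^3 := by
        rcases le_or_gt u A with h | h
        · exact key_mono1 A L u (Real.log u) hApos hup hxlb hL0 (by linarith) h
        · have hax : a ≤ Real.log u := by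
            rw [hadef]; exact Real.log_le_log hApos h.le
          have hL2u : L^2 * u ≤ A * a^2 := by
            rw [hTval, lt_div_iff₀ (by positivity : (0:ℝ) < L^2)] at huT
            linarith
          exact key_mono2 A L a u (Real.log u) hApos hup hxlb ha3 hax hL2u
      exact mul_nonneg (by linarith) (by positivity)
  -- bounds on x0 = log (22 T)
  have h22Tpos : (0:ℝ) < 22 * T := by linarith
  obtain ⟨x0, hx0def⟩ : ∃ x0 : ℝ, x0 = Real.log (22 * T) := ⟨_, rfl⟩
  have hx0eq : x0 = Real.log 22 + a + 2 * Real.log (a / L) := by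
    have h1 : 22 * T = 22 * (A * (a/L)^2) := by rw [hTval]; field_simp
    rw [hx0def, h1, Real.log_mul (by norm_num) (by positivity),
      Real.log_mul hApos.ne' (by positivity), Real.log_pow, ← hadef]
    push_cast
    ring
  have hlog22u : Real.log 22 ≤ 5 * L := by
    have h1 : Real.log 22 ≤ Real.log 32 := Real.log_le_log (by norm_num) (by norm_num)
    have h2 : Real.log 32 = 5 * L := by
      rw [show (32:ℝ) = 2 ^ (5:ℕ) by norm_num, Real.log_pow, ← hLdef]; push_cast; ring
    linarith
  have hlog22l : 4 * L ≤ Real.log 22 := by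
    have h1 : Real.log 16 ≤ Real.log 22 := Real.log_le_log (by norm_num) (by norm_num)
    have h2 : Real.log 16 = 4 * L := by
      rw [show (16:ℝ) = 2 ^ (4:ℕ) by norm_num, Real.log_pow, ← hLdef]; push_cast; ring
    linarith
  have haL4 : (4:ℝ) ≤ a / L := (le_div_iff₀ hL0).mpr (by nlinarith)
  have hlogaL_l : 2 * L ≤ Real.log (a / L) := by
    have h1 : Real.log 4 ≤ Real.log (a/L) := Real.log_le_log (by norm_num) haL4
    have h2 : Real.log 4 = 2 * L := by
      rw [show (4:ℝ) = 2 ^ (2:ℕ) by norm_num, Real.log_pow, ← hLdef]; push_cast; ring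
    linarith
  have hlogaL_u : Real.log (a / L) ≤ a/3 - 1 + 2*L + 0.4428 := by
    have hane : (0:ℝ) < a := by linarith
    have h1 : Real.log (a/L) = Real.log a - Real.log L := Real.log_div hane.ne' hL0.ne'
    have h2 : Real.log (a/3) ≤ a/3 - 1 := Real.log_le_sub_one_of_pos (by linarith)
    have h3 : Real.log (a/3) = Real.log a - Real.log 3 := Real.log_div hane.ne' (by norm_num)
    have h4 : Real.log 3 ≤ 2 * L := by
      have := Real.log_le_log (by norm_num : (0:ℝ) < 3) (by norm_num : (3:ℝ) ≤ 4)
      have h2' : Real.log 4 = 2 * L := by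
        rw [show (4:ℝ) = 2 ^ (2:ℕ) by norm_num, Real.log_pow, ← hLdef]; push_cast; ring
      linarith
    have h5 : - Real.log L ≤ 0.4428 := by
      have := Real.log_le_sub_one_of_pos (show (0:ℝ) < L⁻¹ by positivity)
      rw [Real.log_inv] at this
      have hinv : L⁻¹ ≤ 1.4428 := by
        rw [inv_le_comm₀ hL0 (by norm_num)]
        nlinarith
      linarith
    linarith
  have hx0lb : (8.5:ℝ) ≤ x0 := by rw [hx0eq]; linarith
  have hx0ub : x0 ≤ 3.38 * a := by rw [hx0eq]; nlinarith
  have h19 : 1.9 * x0^2 ≤ 22 * a^2 := by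
    nlinarith [mul_le_mul hx0ub hx0ub (by linarith : (0:ℝ) ≤ x0) (by nlinarith : (0:ℝ) ≤ 3.38 * a)]
  -- antitone part for g
  have hganti : AntitoneOn g (Set.Ici (22 * T)) := by
    apply antitoneOn_of_deriv_nonpos (convex_Ici _)
    · intro u hu
      have hu1 : (1:ℝ) < u := by have : 22 * T ≤ u := hu; linarith
      exact (hgd u hu1).continuousAt.continuousWithinAt
    · rw [interior_Ici]
      intro u hu
      have hu1 : (1:ℝ) < u := by have : 22 * T < u := hu; linarith
      exact (hgd u hu1).differentiableAt.differentiableWithinAt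
    · rw [interior_Ici]
      intro u hu
      have huT : 22 * T < u := hu
      have hu1 : (1:ℝ) < u := by linarith
      have hup : (0:ℝ) < u := by linarith
      have hlogu : 0 < Real.log u := Real.log_pos hu1
      rw [(hgd u hu1).deriv, hderiv_eq u hup hlogu]
      have hxge : x0 ≤ Real.log u := by
        rw [hx0def]; exact Real.log_le_log h22Tpos huT.le
      obtain ⟨s, hsdef⟩ : ∃ s : ℝ, s = Real.log u - x0 := ⟨_, rfl⟩
      have hs : 0 ≤ s := by rw [hsdef]; linarith
      have hxs : Real.log u = x0 + s := by rw [hsdef]; ring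
      have huexp : u = (22 * T) * Real.exp s := by
        conv_lhs => rw [← Real.exp_log hup]
        rw [hxs, Real.exp_add, hx0def, Real.exp_log h22Tpos]
      have hLu : L^2 * u = 22 * A * a^2 * Real.exp s := by
        rw [huexp, hTval]; field_simp
      have key := key_anti a x0 s hx0lb hs h19
      have keyf : A * Real.log u ^ 3 ≤ L^2 * u * (Real.log u - 2) := by
        have h1 : A * (x0+s)^3 ≤ A * (22 * a^2 * (Real.exp s * (x0 + s - 2))) :=
          mul_le_mul_of_nonneg_left key hApos.le
        have h2 : L^2 * u * (Real.log u - 2) = A * (22 * a^2 * (Real.exp s * (x0 + s - 2))) := by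
          rw [hLu, hxs]; ring
        rw [h2, hxs]
        exact h1
      exact mul_nonpos_iff.mpr (Or.inr ⟨by linarith, by positivity⟩)
  -- assemble monotone / antitone for f
  have part1 : MonotoneOn f (Set.Icc 32 T) := by
    intro u hu v hv huv
    rw [hfexp u hu.1, hfexp v hv.1]
    exact Real.exp_le_exp.2 (hgmono hu hv huv)
  have part2 : AntitoneOn f (Set.Ici (22 * T)) := by
    intro u hu v hv huv
    have hu32 : (32:ℝ) ≤ u := by have : 22*T ≤ u := hu; linarith
    have hv32 : (32:ℝ) ≤ v := by have : 22*T ≤ v := hv; linarith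
    rw [hfexp u hu32, hfexp v hv32]
    exact Real.exp_le_exp.2 (hganti hu hv huv)
  refine ⟨part1, part2, ?_⟩
  -- the exponent comparison factor
  have hexpo : ∀ w : ℝ, 1 < w → w / (16 * (Real.logb 2 w)^2) = (L^2/16) * (w / Real.log w^2) := by
    intro w hw
    have hlw : 0 < Real.log w := Real.log_pos hw
    rw [Real.logb, ← hLdef]
    field_simp
  have hfactor : ∀ u : ℝ, T ≤ u →
      (2:ℝ) ^ (-(u / (16 * (Real.logb 2 u)^2))) ≤ (2:ℝ) ^ (-(T / (16 * (Real.logb 2 T)^2))) := by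
    intro u hu
    have hT1 : (1:ℝ) < T := by linarith
    have hu1 : (1:ℝ) < u := by linarith
    rw [Real.rpow_le_rpow_left_iff (by norm_num : (1:ℝ) < 2), neg_le_neg_iff,
      hexpo T hT1, hexpo u hu1]
    apply mul_le_mul_of_nonneg_left _ (by positivity)
    exact phi_mono (show T ∈ Set.Ici (8:ℝ) by simp; linarith)
      (show u ∈ Set.Ici (8:ℝ) by simp; linarith) hu
  have hb2 : (0:ℝ) ≤ (2:ℝ) ^ (-(T / (16 * (Real.logb 2 T)^2))) :=
    (Real.rpow_pos_of_pos (by norm_num) _).le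
  have hβinv : (0:ℝ) ≤ 1 / β := by positivity
  intro t ht
  rcases le_total t T with h | h
  · have h1 : f t ≤ f T := part1 ⟨ht, h⟩ ⟨by linarith, le_refl T⟩ h
    rw [hf T (by linarith)] at h1
    calc f t ≤ T ^ (1/β) * (2:ℝ) ^ (-(T / (16 * (Real.logb 2 T)^2))) := h1
      _ ≤ (22*T) ^ (1/β) * (2:ℝ) ^ (-(T / (16 * (Real.logb 2 T)^2))) :=
        mul_le_mul_of_nonneg_right
          (Real.rpow_le_rpow (by linarith) (by linarith) hβinv) hb2
  · rcases le_total t (22 * T) with h2 | h2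
    · rw [hf t ht]
      exact mul_le_mul (Real.rpow_le_rpow (by linarith) h2 hβinv) (hfactor t h)
        (Real.rpow_pos_of_pos (by norm_num) _).le (Real.rpow_pos_of_pos (by linarith) _).le
    · have h1 : f t ≤ f (22 * T) := part2 (Set.mem_Ici.mpr (le_refl _)) h2 h2
      rw [hf (22 * T) (by linarith)] at h1
      calc f t ≤ (22*T) ^ (1/β) * (2:ℝ) ^ (-((22*T) / (16 * (Real.logb 2 (22*T))^2))) := h1
        _ ≤ (22*T) ^ (1/β) * (2:ℝ) ^ (-(T / (16 * (Real.logb 2 T)^2))) :=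
          mul_le_mul_of_nonneg_left (hfactor (22*T) (by linarith))
            (Real.rpow_pos_of_pos (by linarith) _).le
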